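/- Two real symmetric integer matrices M(G) and M(H) of size n×n are cospectral if and only if xI − M(G) and xI − M(H) have the same k-th determinantal ideals over ℚ[x] for all 1 ≤ k ≤ n. (In particular, cospectrality implies codeterminantality over ℚ[x].) -/

import Mathlib

open Matrix Polynomial

variable {R : Type*} [CommRing R] {n k : ℕ}

def minorSet (k : ℕ) (A : Matrix (Fin n) (Fin n) R) : Set R :=
  {p | ∃ f g : Fin k → Fin n, Function.Injective f ∧ Function.Injective g ∧
    p = (A.submatrix f g).det}

lemma det_mul_submatrix_mem (B A : Matrix (Fin n) (Fin n) R) (f g : Fin k → Fin n)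
    (hg : Function.Injective g) :
    ((B * A).submatrix f g).det ∈ Ideal.span (minorSet k A) := by
  classical
  have hrep : (B * A).submatrix f g
      = Matrix.of fun i => ∑ m : Fin n, B (f i) m • fun j => A m (g j) := by
    ext i j
    simp [Matrix.mul_apply, Finset.sum_apply]
  rw [hrep]
  show Matrix.detRowAlternating _ ∈ _
  rw [show ((Matrix.of fun i => ∑ m : Fin n, B (f i) m • fun j => A m (g j)) :
      Fin k → Fin k → R) = fun i => ∑ m : Fin n, B (f i) m • fun j => A m (g j) from rfl]
  rw [← (Matrix.detRowAlternating (R := R) (n := Fin k)).coe_multilinearMap]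
  rw [(Matrix.detRowAlternating (R := R) (n := Fin k)).toMultilinearMap.map_sum]
  refine Ideal.sum_mem _ fun r _ => ?_
  rw [(Matrix.detRowAlternating (R := R) (n := Fin k)).toMultilinearMap.map_smul_univ,
    (Matrix.detRowAlternating (R := R) (n := Fin k)).coe_multilinearMap]
  by_cases hr : Function.Injective r
  · exact Ideal.mul_mem_left _ _ (Ideal.subset_span ⟨r, g, hr, hg, rfl⟩)
  · have : Matrix.detRowAlternating (R := R) (n := Fin k)
        (fun i => fun j => A (r i) (g j)) = 0 := by
      obtain ⟨i, j, hij, hne⟩ : ∃ i j, r i = r j ∧ i ≠ j := by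
        simp only [Function.Injective, not_forall] at hr
        obtain ⟨i, j, h1, h2⟩ := hr
        exact ⟨i, j, h1, h2⟩
      exact Matrix.det_zero_of_row_eq hne (by ext c; simp [hij])
    rw [this, smul_zero]
    exact Ideal.zero_mem _

lemma minorSet_transpose (A : Matrix (Fin n) (Fin n) R) :
    minorSet k Aᵀ = minorSet k A := by
  ext p
  constructor
  · rintro ⟨f, g, hf, hg, rfl⟩
    exact ⟨g, f, hg, hf, by rw [← Matrix.det_transpose, Matrix.transpose_submatrix,
      Matrix.transpose_transpose]⟩
  · rintro ⟨f, g, hf, hg, rfl⟩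
    exact ⟨g, f, hg, hf, by rw [← Matrix.det_transpose, Matrix.transpose_submatrix]⟩

lemma det_submatrix_mul_mem (A C : Matrix (Fin n) (Fin n) R) (f g : Fin k → Fin n)
    (hf : Function.Injective f) :
    ((A * C).submatrix f g).det ∈ Ideal.span (minorSet k A) := by
  have h := det_mul_submatrix_mem Cᵀ Aᵀ g f hf
  rw [minorSet_transpose] at h
  rwa [← Matrix.det_transpose, Matrix.transpose_submatrix, Matrix.transpose_mul]

lemma span_minorSet_mul_le (B A C : Matrix (Fin n) (Fin n) R) :
    Ideal.span (minorSet k (B * A * C)) ≤ Ideal.span (minorSet k A) := by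
  rw [Ideal.span_le]
  rintro p ⟨f, g, hf, hg, rfl⟩
  have h1 : ((B * (A * C)).submatrix f g).det ∈ Ideal.span (minorSet k (A * C)) :=
    det_mul_submatrix_mem B (A * C) f g hg
  rw [← mul_assoc] at h1
  refine (Ideal.span_le.mpr ?_ : Ideal.span (minorSet k (A * C)) ≤ _) h1
  rintro q ⟨f', g', hf', hg', rfl⟩
  exact det_submatrix_mul_mem A C f' g' hf'

lemma span_minorSet_conj (S T A : Matrix (Fin n) (Fin n) R)
    (hST : S * T = 1) (hTS : T * S = 1) :
    Ideal.span (minorSet k (S * A * T)) = Ideal.span (minorSet k A) := by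
  refine le_antisymm (span_minorSet_mul_le S A T) ?_
  have : A = T * (S * A * T) * S := by
    rw [show T * (S * A * T) * S = (T * S) * A * (T * S) by noncomm_ring, hTS, one_mul, mul_one]
  conv_lhs => rw [this]
  exact span_minorSet_mul_le T (S * A * T) S

def Sim (A B : Matrix (Fin n) (Fin n) R) : Prop :=
  ∃ S T : Matrix (Fin n) (Fin n) R, S * T = 1 ∧ T * S = 1 ∧ B = S * A * T

lemma Sim.refl (A : Matrix (Fin n) (Fin n) R) : Sim A A :=
  ⟨1, 1, one_mul 1, one_mul 1, by simp⟩

lemma Sim.symm {A B : Matrix (Fin n) (Fin n) R} (h : Sim A B) : Sim B A := by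
  obtain ⟨S, T, hST, hTS, rfl⟩ := h
  exact ⟨T, S, hTS, hST, by
    rw [show T * (S * A * T) * S = (T * S) * A * (T * S) by noncomm_ring, hTS, one_mul, mul_one]⟩

lemma Sim.trans {A B C : Matrix (Fin n) (Fin n) R} (h1 : Sim A B) (h2 : Sim B C) : Sim A C := by
  obtain ⟨S, T, hST, hTS, rfl⟩ := h1
  obtain ⟨S', T', hST', hTS', rfl⟩ := h2
  refine ⟨S' * S, T * T', ?_, ?_, by noncomm_ring⟩
  · rw [show S' * S * (T * T') = S' * (S * T) * T' by noncomm_ring, hST, mul_one, hST']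
  · rw [show T * T' * (S' * S) = T * (T' * S') * S by noncomm_ring, hTS', mul_one, hTS]

lemma Sim.charpoly_eq {A B : Matrix (Fin n) (Fin n) R} (h : Sim A B) :
    A.charpoly = B.charpoly := by
  obtain ⟨S, T, hST, hTS, rfl⟩ := h
  unfold Matrix.charpoly
  have hone : (C : R →+* R[X]).mapMatrix S * (C : R →+* R[X]).mapMatrix T = 1 := by
    rw [← _root_.map_mul, hST, _root_.map_one]
  have hone' : (C : R →+* R[X]).mapMatrix T * (C : R →+* R[X]).mapMatrix S = 1 := by
    rw [← _root_.map_mul, hTS, _root_.map_one]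
  have key : charmatrix (S * A * T)
      = (C : R →+* R[X]).mapMatrix S * charmatrix A * (C : R →+* R[X]).mapMatrix T := by
    unfold charmatrix
    rw [Matrix.mul_sub, Matrix.sub_mul, _root_.map_mul, _root_.map_mul]
    congr 1
    have hcomm := (Matrix.scalar_commute (n := Fin n) (X : R[X])
      (fun r' => Commute.all _ _) ((C : R →+* R[X]).mapMatrix T)).eq
    rw [mul_assoc, hcomm, ← mul_assoc, hone, one_mul]
  rw [key, Matrix.det_mul, Matrix.det_mul, mul_comm, ← mul_assoc, ← Matrix.det_mul, hone']
  simp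

lemma sim_spectral (A : Matrix (Fin n) (Fin n) ℝ) (hA : A.IsHermitian) :
    Sim A (Matrix.diagonal hA.eigenvalues) := by
  have h := hA.spectral_theorem
  rw [RCLike.ofReal_real_eq_id, Function.id_comp] at h
  set U := (hA.eigenvectorUnitary : Matrix (Fin n) (Fin n) ℝ) with hU
  have h1 : star U * U = 1 := Unitary.star_mul_self_of_mem (hA.eigenvectorUnitary).2
  have h2 : U * star U = 1 := Unitary.mul_star_self_of_mem (hA.eigenvectorUnitary).2
  refine ⟨star U, U, h1, h2, ?_⟩
  conv_rhs => rw [h, Unitary.conjStarAlgAut_apply]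
  rw [show star U * (U * Matrix.diagonal hA.eigenvalues * star U) * U
    = (star U * U) * Matrix.diagonal hA.eigenvalues * (star U * U) by noncomm_ring, h1,
    one_mul, mul_one]

lemma sim_diag_perm (d : Fin n → ℝ) (e : Fin n ≃ Fin n) :
    Sim (Matrix.diagonal d) (Matrix.diagonal (d ∘ e)) := by
  classical
  have hS : ∀ M : Matrix (Fin n) (Fin n) ℝ,
      (1 : Matrix (Fin n) (Fin n) ℝ).submatrix (⇑e) id * M = M.submatrix (⇑e) id := by
    intro M
    have := Matrix.one_submatrix_mul (α := ℝ) (⇑e) (Equiv.refl (Fin n)) M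
    simpa using this
  have hT : ∀ M : Matrix (Fin n) (Fin n) ℝ,
      M * (1 : Matrix (Fin n) (Fin n) ℝ).submatrix id (⇑e) = M.submatrix id (⇑e) := by
    intro M
    have := Matrix.mul_submatrix_one (α := ℝ) (Equiv.refl (Fin n)) (⇑e) M
    simpa using this
  refine ⟨(1 : Matrix (Fin n) (Fin n) ℝ).submatrix (⇑e) id,
    (1 : Matrix (Fin n) (Fin n) ℝ).submatrix id (⇑e), ?_, ?_, ?_⟩
  · rw [hS, Matrix.submatrix_submatrix, Function.comp_id, Function.id_comp,
      Matrix.submatrix_one_equiv]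
  · have := Matrix.submatrix_mul_equiv (1 : Matrix (Fin n) (Fin n) ℝ)
      (1 : Matrix (Fin n) (Fin n) ℝ) (id : Fin n → Fin n) e (id : Fin n → Fin n)
    rw [this]
    simp
  · rw [mul_assoc, hT, hS, Matrix.submatrix_submatrix, Function.comp_id, Function.id_comp]
    ext i j
    by_cases hij : i = j <;>
      simp [Matrix.diagonal_apply, hij, e.injective.eq_iff]

lemma exists_comp_eq_of_multiset_eq {α : Type*} [LinearOrder α] {μ ν : Fin n → α}
    (h : (↑(List.ofFn μ) : Multiset α) = ↑(List.ofFn ν)) : ∃ e : Fin n ≃ Fin n, ν = μ ∘ e := by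
  have hperm : (List.ofFn μ).Perm (List.ofFn ν) := Multiset.coe_eq_coe.mp h
  have h1 := (Tuple.sort μ).ofFn_comp_perm μ
  have h2 := (Tuple.sort ν).ofFn_comp_perm ν
  have heq : List.ofFn (μ ∘ Tuple.sort μ) = List.ofFn (ν ∘ Tuple.sort ν) :=
    List.Perm.eq_of_sortedLE (List.sortedLE_ofFn_iff.mpr (Tuple.monotone_sort μ))
      (List.sortedLE_ofFn_iff.mpr (Tuple.monotone_sort ν)) (h1.trans (hperm.trans h2.symm))
  have heq' : μ ∘ Tuple.sort μ = ν ∘ Tuple.sort ν := List.ofFn_injective heq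
  refine ⟨(Tuple.sort ν).symm.trans (Tuple.sort μ), ?_⟩
  ext x
  have := congrFun heq' ((Tuple.sort ν).symm x)
  simpa using this.symm

lemma charpoly_diagonal (d : Fin n → R) :
    (Matrix.diagonal d).charpoly = ∏ i, (X - C (d i)) := by
  classical
  unfold Matrix.charpoly
  have : charmatrix (Matrix.diagonal d) = Matrix.diagonal (fun i => (X : R[X]) - C (d i)) := by
    apply Matrix.ext
    intro i j
    by_cases hij : i = j
    · subst hij; simp [charmatrix_apply_eq]
    · rw [charmatrix_apply_ne _ _ _ hij, Matrix.diagonal_apply_ne _ hij,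
        Matrix.diagonal_apply_ne _ hij]
      simp
  rw [this, Matrix.det_diagonal]

lemma multiset_eq_of_charpoly_diag {μ ν : Fin n → ℝ}
    (h : (∏ i, (X - C (μ i)) : ℝ[X]) = ∏ i, (X - C (ν i))) :
    (↑(List.ofFn μ) : Multiset ℝ) = ↑(List.ofFn ν) := by
  have key : ∀ f : Fin n → ℝ, (∏ i, (X - C (f i)) : ℝ[X])
      = ((↑(List.ofFn f) : Multiset ℝ).map fun a => X - C a).prod := by
    intro f
    rw [Finset.prod_eq_multiset_prod, ← Fin.univ_val_map]
    simp [Function.comp_def]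
  rw [key μ, key ν] at h
  have h2 := congrArg Polynomial.roots h
  rwa [Polynomial.roots_multiset_prod_X_sub_C, Polynomial.roots_multiset_prod_X_sub_C] at h2

lemma isHermitian_of_isSymm (A : Matrix (Fin n) (Fin n) ℝ) (h : A.IsSymm) : A.IsHermitian := by
  apply Matrix.ext
  intro i j
  rw [Matrix.conjTranspose_apply, star_trivial]
  exact h.apply i j

lemma sim_of_symm_charpoly (A B : Matrix (Fin n) (Fin n) ℝ) (hA : A.IsHermitian)
    (hB : B.IsHermitian) (h : A.charpoly = B.charpoly) : Sim A B := by
  have sA := sim_spectral A hA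
  have sB := sim_spectral B hB
  have hd : (Matrix.diagonal hA.eigenvalues).charpoly
      = (Matrix.diagonal hB.eigenvalues).charpoly := by
    rw [← sA.charpoly_eq, ← sB.charpoly_eq, h]
  rw [_root_.charpoly_diagonal, _root_.charpoly_diagonal] at hd
  obtain ⟨e, he⟩ := exists_comp_eq_of_multiset_eq (multiset_eq_of_charpoly_diag hd)
  refine sA.trans (Sim.trans ?_ sB.symm)
  rw [he]
  exact sim_diag_perm hA.eigenvalues e

lemma charmatrix_conj (S T A : Matrix (Fin n) (Fin n) R) (hST : S * T = 1) :
    charmatrix (S * A * T)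
      = (C : R →+* R[X]).mapMatrix S * charmatrix A * (C : R →+* R[X]).mapMatrix T := by
  have hone : (C : R →+* R[X]).mapMatrix S * (C : R →+* R[X]).mapMatrix T = 1 := by
    rw [← _root_.map_mul, hST, _root_.map_one]
  unfold charmatrix
  rw [Matrix.mul_sub, Matrix.sub_mul, _root_.map_mul, _root_.map_mul]
  congr 1
  have hcomm := (Matrix.scalar_commute (n := Fin n) (X : R[X])
    (fun r' => Commute.all _ _) ((C : R →+* R[X]).mapMatrix T)).eq
  rw [mul_assoc, hcomm, ← mul_assoc, hone, one_mul]

lemma Sim.charmatrix_sim {A B : Matrix (Fin n) (Fin n) R} (h : Sim A B) :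
    Sim (charmatrix A) (charmatrix B) := by
  obtain ⟨S, T, hST, hTS, rfl⟩ := h
  refine ⟨(C : R →+* R[X]).mapMatrix S, (C : R →+* R[X]).mapMatrix T, ?_, ?_,
    charmatrix_conj S T A hST⟩
  · rw [← _root_.map_mul, hST, _root_.map_one]
  · rw [← _root_.map_mul, hTS, _root_.map_one]

lemma Sim.span_minorSet_eq {A B : Matrix (Fin n) (Fin n) R} (h : Sim A B) :
    Ideal.span (minorSet k B) = Ideal.span (minorSet k A) := by
  obtain ⟨S, T, hST, hTS, rfl⟩ := h
  exact span_minorSet_conj S T A hST hTS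

lemma map_span_minorSet {S' : Type*} [CommRing S'] (φ : R →+* S') (A : Matrix (Fin n) (Fin n) R) :
    Ideal.map φ (Ideal.span (minorSet k A)) = Ideal.span (minorSet k (A.map φ)) := by
  rw [Ideal.map_span]
  congr 1
  ext p
  constructor
  · rintro ⟨q, ⟨f, g, hf, hg, rfl⟩, rfl⟩
    exact ⟨f, g, hf, hg, by simp [RingHom.map_det, Matrix.submatrix_map, RingHom.mapMatrix_apply]⟩
  · rintro ⟨f, g, hf, hg, rfl⟩
    exact ⟨(A.submatrix f g).det, ⟨f, g, hf, hg, rfl⟩,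
      by simp [RingHom.map_det, Matrix.submatrix_map, RingHom.mapMatrix_apply]⟩

lemma ideal_eq_of_map_eq {I J : Ideal ℚ[X]}
    (h : Ideal.map (Polynomial.mapRingHom (algebraMap ℚ ℝ)) I
       = Ideal.map (Polynomial.mapRingHom (algebraMap ℚ ℝ)) J) : I = J := by
  obtain ⟨p, rfl⟩ : ∃ p, I = Ideal.span {p} :=
    ⟨Submodule.IsPrincipal.generator I, (Ideal.span_singleton_generator I).symm⟩
  obtain ⟨q, rfl⟩ : ∃ q, J = Ideal.span {q} :=
    ⟨Submodule.IsPrincipal.generator J, (Ideal.span_singleton_generator J).symm⟩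
  rw [Ideal.map_span, Ideal.map_span, Set.image_singleton, Set.image_singleton] at h
  have hassoc := Ideal.span_singleton_eq_span_singleton.mp h
  rw [Ideal.span_singleton_eq_span_singleton]
  obtain ⟨u, hu⟩ := hassoc
  have hu' : p.map (algebraMap ℚ ℝ) * (u : ℝ[X]) = q.map (algebraMap ℚ ℝ) := by
    simpa [Polynomial.coe_mapRingHom] using hu
  have h1 : p ∣ q := by
    rw [← Polynomial.map_dvd_map' (algebraMap ℚ ℝ)]
    exact ⟨(u : ℝ[X]), hu'.symm⟩
  have h2 : q ∣ p := by
    rw [← Polynomial.map_dvd_map' (algebraMap ℚ ℝ)]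
    exact ⟨((u⁻¹ : ℝ[X]ˣ) : ℝ[X]), by rw [← hu', mul_assoc, Units.mul_inv, mul_one]⟩
  exact (associated_of_dvd_dvd h1 h2)

lemma span_minorSet_top (A : Matrix (Fin n) (Fin n) R) :
    Ideal.span (minorSet n A) = Ideal.span {A.det} := by
  classical
  refine le_antisymm (Ideal.span_le.mpr ?_) (Ideal.span_le.mpr ?_)
  · rintro p ⟨f, g, hf, hg, rfl⟩
    have hfb := (Finite.injective_iff_bijective).mp hf
    have hgb := (Finite.injective_iff_bijective).mp hg
    let ef : Equiv.Perm (Fin n) := Equiv.ofBijective f hfb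
    let eg : Equiv.Perm (Fin n) := Equiv.ofBijective g hgb
    have h1 : A.submatrix f g = (A.submatrix id ⇑eg).submatrix ⇑ef id := by
      rw [Matrix.submatrix_submatrix, Function.id_comp, Function.comp_id]
      rfl
    rw [SetLike.mem_coe, h1, Matrix.det_permute, Matrix.det_permute', Ideal.mem_span_singleton]
    exact Dvd.dvd.mul_left (Dvd.dvd.mul_left dvd_rfl _) _
  · intro p hp
    rw [Set.mem_singleton_iff] at hp
    subst hp
    exact Ideal.subset_span ⟨id, id, Function.injective_id, Function.injective_id,
      by rw [Matrix.submatrix_id_id]⟩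

lemma P_eq_charmatrix (M : Matrix (Fin n) (Fin n) ℤ) :
    (X : ℚ[X]) • (1 : Matrix (Fin n) (Fin n) ℚ[X]) - M.map (fun a => C ((a : ℚ)))
      = charmatrix (M.map ⇑(Int.castRingHom ℚ)) := by
  unfold charmatrix
  have hscal : (Matrix.scalar (Fin n)) (X : ℚ[X]) = (X : ℚ[X]) • 1 := by
    apply Matrix.ext; intro i j
    by_cases hij : i = j <;> simp [hij, Matrix.one_apply]
  rw [hscal, RingHom.mapMatrix_apply, Matrix.map_map]
  rfl

theorem stmt_14 {n : ℕ} (M N : Matrix (Fin n) (Fin n) ℤ)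
    (hM : M.IsSymm) (hN : N.IsSymm) :
    let P : Matrix (Fin n) (Fin n) ℤ → Matrix (Fin n) (Fin n) ℚ[X] :=
      fun A => (Polynomial.X : ℚ[X]) • (1 : Matrix (Fin n) (Fin n) ℚ[X])
        - A.map (fun a => Polynomial.C (a : ℚ))
    (M.charpoly = N.charpoly ↔
      ∀ k : ℕ, 1 ≤ k → k ≤ n →
        Ideal.span {p : ℚ[X] | ∃ f g : Fin k → Fin n,
            Function.Injective f ∧ Function.Injective g ∧ p = ((P M).submatrix f g).det}
          = Ideal.span {p : ℚ[X] | ∃ f g : Fin k → Fin n,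
            Function.Injective f ∧ Function.Injective g ∧ p = ((P N).submatrix f g).det}) := by
  intro P
  have e1 : P M = charmatrix (M.map ⇑(Int.castRingHom ℚ)) := P_eq_charmatrix M
  have e2 : P N = charmatrix (N.map ⇑(Int.castRingHom ℚ)) := P_eq_charmatrix N
  constructor
  · intro h k hk1 hkn
    show Ideal.span (minorSet k (P M)) = Ideal.span (minorSet k (P N))
    rw [e1, e2]
    apply ideal_eq_of_map_eq
    rw [map_span_minorSet, map_span_minorSet]
    have e3 : ∀ A : Matrix (Fin n) (Fin n) ℤ,
        (charmatrix (A.map ⇑(Int.castRingHom ℚ))).map ⇑(Polynomial.mapRingHom (algebraMap ℚ ℝ))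
          = charmatrix (A.map ⇑(Int.castRingHom ℝ)) := by
      intro A
      rw [show ⇑(Polynomial.mapRingHom (algebraMap ℚ ℝ)) = Polynomial.map (algebraMap ℚ ℝ) from
        funext fun p => Polynomial.coe_mapRingHom (algebraMap ℚ ℝ) ▸ rfl]
      rw [← charmatrix_map, Matrix.map_map]
      exact congrArg charmatrix (congrArg A.map (funext fun a => map_intCast (algebraMap ℚ ℝ) a))
    rw [e3, e3]
    have hcharR : (M.map ⇑(Int.castRingHom ℝ)).charpoly = (N.map ⇑(Int.castRingHom ℝ)).charpoly := by
      rw [Matrix.charpoly_map, Matrix.charpoly_map, h]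
    have hsim : Sim (M.map ⇑(Int.castRingHom ℝ)) (N.map ⇑(Int.castRingHom ℝ)) :=
      sim_of_symm_charpoly _ _ (isHermitian_of_isSymm _ (hM.map _))
        (isHermitian_of_isSymm _ (hN.map _)) hcharR
    exact (hsim.charmatrix_sim).span_minorSet_eq.symm
  · intro h
    rcases Nat.eq_zero_or_pos n with hn | hn
    · have : M = N := by
        subst hn
        apply Matrix.ext
        intro i
        exact i.elim0
      rw [this]
    · have hk : Ideal.span (minorSet n (P M)) = Ideal.span (minorSet n (P N)) := h n hn le_rfl
      rw [e1, e2, span_minorSet_top, span_minorSet_top] at hk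
      have hassoc := Ideal.span_singleton_eq_span_singleton.mp hk
      have hq : (M.map ⇑(Int.castRingHom ℚ)).charpoly = (N.map ⇑(Int.castRingHom ℚ)).charpoly :=
        Polynomial.eq_of_monic_of_associated (Matrix.charpoly_monic _)
          (Matrix.charpoly_monic _) hassoc
      rw [Matrix.charpoly_map, Matrix.charpoly_map] at hq
      exact Polynomial.map_injective _ Int.cast_injective hq
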